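/- Let A be an m × N real matrix, r ∈ R^N, and Ω a linear subspace of R^N containing r. Let P_Ω denote orthogonal projection onto Ω. If ρ > 0 satisfies ‖A P_Ω(Aᵀ A r)‖² ≤ ρ‖P_Ω(Aᵀ A r)‖², then ‖P_Ω(Aᵀ A r)‖² ≤ ρ‖A r‖². -/

import Mathlib

open Matrix

/-- If `r ∈ Ω` and `‖A P_Ω(AᵀA r)‖² ≤ ρ ‖P_Ω(AᵀA r)‖²`, then
`‖P_Ω(AᵀA r)‖² ≤ ρ ‖A r‖²`. -/
theorem proj_grad_norm_bound {m N : ℕ} (A : Matrix (Fin m) (Fin N) ℝ)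
    (r : EuclideanSpace ℝ (Fin N)) (Ω : Submodule ℝ (EuclideanSpace ℝ (Fin N)))
    (hr : r ∈ Ω) (ρ : ℝ) (hρ : 0 < ρ)
    (h : ‖Matrix.toEuclideanLin A
        ((Ω.orthogonalProjectionOnto (Matrix.toEuclideanLin (Aᵀ * A) r) :
          EuclideanSpace ℝ (Fin N)))‖ ^ 2
      ≤ ρ * ‖(Ω.orthogonalProjectionOnto (Matrix.toEuclideanLin (Aᵀ * A) r) :
          EuclideanSpace ℝ (Fin N))‖ ^ 2) :
    ‖(Ω.orthogonalProjectionOnto (Matrix.toEuclideanLin (Aᵀ * A) r) :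
        EuclideanSpace ℝ (Fin N))‖ ^ 2
      ≤ ρ * ‖Matrix.toEuclideanLin A r‖ ^ 2 := by
  set p : EuclideanSpace ℝ (Fin N) :=
    (Ω.orthogonalProjectionOnto (Matrix.toEuclideanLin (Aᵀ * A) r) : EuclideanSpace ℝ (Fin N))
    with hp
  have hA : Matrix.toEuclideanLin Aᵀ = LinearMap.adjoint (Matrix.toEuclideanLin A) := by
    rw [← Matrix.toEuclideanLin_conjTranspose_eq_adjoint]
    congr 1
  -- key: ‖p‖² = ⟪A p, A r⟫
  have key : ‖p‖ ^ 2 = inner ℝ (Matrix.toEuclideanLin A p) (Matrix.toEuclideanLin A r) := by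
    have horth : (inner ℝ p (Matrix.toEuclideanLin (Aᵀ * A) r - p) : ℝ) = 0 := by
      have hmem : Matrix.toEuclideanLin (Aᵀ * A) r - p ∈ Ωᗮ := by
        rw [hp]; exact Submodule.sub_starProjection_mem_orthogonal (K := Ω) _
      exact (Submodule.mem_orthogonal Ω _).1 hmem p (Submodule.coe_mem _)
    have h1 : (inner ℝ p p : ℝ) = inner ℝ p (Matrix.toEuclideanLin (Aᵀ * A) r) := by
      have := horth
      rw [inner_sub_right] at this
      linarith
    have h2 : Matrix.toEuclideanLin (Aᵀ * A) r
        = Matrix.toEuclideanLin Aᵀ (Matrix.toEuclideanLin A r) := by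
      simp [Matrix.toEuclideanLin_apply, ← Matrix.mulVec_mulVec]
    rw [← real_inner_self_eq_norm_sq, h1, h2, hA, LinearMap.adjoint_inner_right]
  have hcs : (inner ℝ (Matrix.toEuclideanLin A p) (Matrix.toEuclideanLin A r) : ℝ)
      ≤ ‖Matrix.toEuclideanLin A p‖ * ‖Matrix.toEuclideanLin A r‖ :=
    real_inner_le_norm _ _
  have hAp : ‖Matrix.toEuclideanLin A p‖ ≤ Real.sqrt ρ * ‖p‖ := by
    have := h
    nlinarith [Real.sq_sqrt hρ.le, Real.sqrt_nonneg ρ, norm_nonneg (Matrix.toEuclideanLin A p),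
      norm_nonneg p, mul_nonneg (Real.sqrt_nonneg ρ) (norm_nonneg p)]
  have hpb : ‖p‖ ^ 2 ≤ Real.sqrt ρ * ‖p‖ * ‖Matrix.toEuclideanLin A r‖ := by
    calc ‖p‖ ^ 2 = _ := key
    _ ≤ ‖Matrix.toEuclideanLin A p‖ * ‖Matrix.toEuclideanLin A r‖ := hcs
    _ ≤ Real.sqrt ρ * ‖p‖ * ‖Matrix.toEuclideanLin A r‖ := by
        have := norm_nonneg (Matrix.toEuclideanLin A r)
        nlinarith
  rcases eq_or_ne p 0 with h0 | h0
  · simp [h0]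
    positivity
  · have hpn : 0 < ‖p‖ := norm_pos_iff.mpr h0
    have h3 : ‖p‖ ≤ Real.sqrt ρ * ‖Matrix.toEuclideanLin A r‖ := by
      nlinarith
    nlinarith [Real.sq_sqrt hρ.le, Real.sqrt_nonneg ρ, norm_nonneg (Matrix.toEuclideanLin A r),
      mul_nonneg (Real.sqrt_nonneg ρ) (norm_nonneg (Matrix.toEuclideanLin A r))]
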